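/- Let V be a finite-dimensional vector space over a field F, let u be an endomorphism of V, and let a₁, a₂ be endomorphisms with a₁² = 0, a₂² = 0 and u = a₁ + a₂. Then for every natural number k, the subspaces Ker(u^k) and Im(u^k) are invariant under a₁ and under a₂. -/
import Mathlib

lemma sq_zero_anticomm_ker {F V : Type*} [Field F] [AddCommGroup V] [Module F V]
    (u a : Module.End F V) (key : a * u + u * a = u ^ 2) (k : ℕ) :
    ∀ x, (u ^ k) x = 0 → (u ^ k) (a x) = 0 := by
  have hkey : ∀ y, u (a y) = (u ^ 2) y - a (u y) := by
    intro y
    have := LinearMap.congr_fun key y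
    simp only [LinearMap.add_apply, Module.End.mul_apply] at this
    rw [← this]; abel
  induction k with
  | zero =>
      intro x hx
      simp only [pow_zero, Module.End.one_apply] at hx ⊢
      rw [hx, map_zero]
  | succ k ih =>
      intro x hx
      have e1 : (u ^ (k + 1)) (a x) = (u ^ k) (u (a x)) := by
        rw [pow_succ]; rfl
      have hx' : (u ^ k) (u x) = 0 := by
        rw [← Module.End.mul_apply, ← pow_succ]; exact hx
      have h2 : (u ^ k) ((u ^ 2) x) = 0 := by
        have : (u ^ k) ((u ^ 2) x) = u ((u ^ (k + 1)) x) := by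
          rw [← Module.End.mul_apply, ← Module.End.mul_apply, ← pow_add, ← pow_succ']
        rw [this, hx, map_zero]
      rw [e1, hkey x, map_sub, h2, ih (u x) hx', sub_zero]

lemma sq_zero_anticomm_range {F V : Type*} [Field F] [AddCommGroup V] [Module F V]
    (u a : Module.End F V) (key : a * u + u * a = u ^ 2) (k : ℕ) :
    ∀ x, ∃ z, a ((u ^ k) x) = (u ^ k) z := by
  have hkey : ∀ y, a (u y) = (u ^ 2) y - u (a y) := by
    intro y
    have := LinearMap.congr_fun key y
    simp only [LinearMap.add_apply, Module.End.mul_apply] at this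
    rw [← this]; abel
  induction k with
  | zero =>
      intro x
      exact ⟨a x, by simp⟩
  | succ k ih =>
      intro x
      obtain ⟨z, hz⟩ := ih x
      refine ⟨u x - z, ?_⟩
      have e1 : (u ^ (k + 1)) x = u ((u ^ k) x) := by rw [pow_succ']; rfl
      have e2 : (u ^ 2) ((u ^ k) x) = (u ^ (k + 1)) (u x) := by
        have h2k : 2 + k = k + 1 + 1 := by omega
        rw [← Module.End.mul_apply, ← Module.End.mul_apply, ← pow_add, ← pow_succ, h2k]
      have e3 : u ((u ^ k) z) = (u ^ (k + 1)) z := by rw [pow_succ']; rfl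
      rw [e1, hkey, hz, e2, e3, map_sub]

/-- If `u = a₁ + a₂` with `a₁² = a₂² = 0`, then for every `k`, the subspaces
`Ker (u^k)` and `Im (u^k)` are invariant under `a₁` and `a₂`. -/
theorem ker_range_pow_stable_of_square_zero_summands
    {F V : Type*} [Field F] [AddCommGroup V] [Module F V] [FiniteDimensional F V]
    (u a₁ a₂ : Module.End F V)
    (h1 : a₁ ^ 2 = 0) (h2 : a₂ ^ 2 = 0) (hu : u = a₁ + a₂) (k : ℕ) :
    (LinearMap.ker (u ^ k)).map a₁ ≤ LinearMap.ker (u ^ k) ∧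
    (LinearMap.ker (u ^ k)).map a₂ ≤ LinearMap.ker (u ^ k) ∧
    (LinearMap.range (u ^ k)).map a₁ ≤ LinearMap.range (u ^ k) ∧
    (LinearMap.range (u ^ k)).map a₂ ≤ LinearMap.range (u ^ k) := by
  have hexp : (a₁ + a₂) ^ 2 = a₁ * a₁ + a₁ * a₂ + a₂ * a₁ + a₂ * a₂ := by
    noncomm_ring
  rw [sq] at h1 h2
  have key1 : a₁ * u + u * a₁ = u ^ 2 := by
    subst hu
    rw [hexp, mul_add, add_mul, h1, h2]
    abel
  have key2 : a₂ * u + u * a₂ = u ^ 2 := by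
    subst hu
    rw [hexp, mul_add, add_mul, h1, h2]
    abel
  refine ⟨?_, ?_, ?_, ?_⟩
  · rintro y ⟨x, hx, rfl⟩
    exact sq_zero_anticomm_ker u a₁ key1 k x hx
  · rintro y ⟨x, hx, rfl⟩
    exact sq_zero_anticomm_ker u a₂ key2 k x hx
  · rintro y ⟨x, ⟨w, rfl⟩, rfl⟩
    obtain ⟨z, hz⟩ := sq_zero_anticomm_range u a₁ key1 k w
    exact ⟨z, hz.symm⟩
  · rintro y ⟨x, ⟨w, rfl⟩, rfl⟩
    obtain ⟨z, hz⟩ := sq_zero_anticomm_range u a₂ key2 k w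
    exact ⟨z, hz.symm⟩
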